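/- Let C ⊆ ℝ^n be a rational polyhedral cone, (v^i)_{i∈ℕ} a sequence of integer vectors in C ∩ ℤ^n, and q* ∈ ℚ^n a rational vector. Then there exist an infinite set I ⊆ ℕ and an index i* ∈ ℕ such that for every i ∈ I: v^i − v^{i*} ∈ C and v^i·q* − ⌊v^i·q*⌋ = v^{i*}·q* − ⌊v^{i*}·q*⌋. -/

import Mathlib

/-- The conical hull of a set: all finite nonnegative combinations. -/
def conicalHull {E : Type*} [AddCommMonoid E] [Module ℝ E] (s : Set E) : Set E :=
  {x | ∃ (k : ℕ) (c : Fin k → ℝ) (v : Fin k → E),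
    (∀ i, 0 ≤ c i) ∧ (∀ i, v i ∈ s) ∧ x = ∑ i, c i • v i}

lemma exists_infinite_fiber'' {α : Type*} (f : ℕ → α) (h : (Set.range f).Finite) :
    ∃ a, (f ⁻¹' {a}).Infinite := by
  by_contra hc
  push_neg at hc
  have h2 : (Set.univ : Set ℕ) ⊆ ⋃ a ∈ Set.range f, f ⁻¹' {a} := fun i _ => by simp
  exact Set.infinite_univ (Set.Finite.subset (h.biUnion fun a _ => hc a) h2)

lemma sum_mem_conicalHull {E : Type*} [AddCommMonoid E] [Module ℝ E] (R : Finset E)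
    (c : E → ℝ) (hc : ∀ r ∈ R, 0 ≤ c r) :
    (∑ r ∈ R, c r • r) ∈ conicalHull (R : Set E) := by
  refine ⟨R.card, fun i => c (R.equivFin.symm i), fun i => (R.equivFin.symm i : E),
    fun i => hc _ (R.equivFin.symm i).2, fun i => (R.equivFin.symm i).2, ?_⟩
  rw [← Finset.sum_coe_sort R (fun r => c r • r)]
  exact Fintype.sum_equiv R.equivFin _ _ (fun r => by simp)

lemma mem_conicalHull_finset {E : Type*} [AddCommMonoid E] [Module ℝ E] {R : Finset E}
    {x : E} (hx : x ∈ conicalHull (R : Set E)) :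
    ∃ c : E → ℝ, (∀ r, 0 ≤ c r) ∧ x = ∑ r ∈ R, c r • r := by
  classical
  obtain ⟨k, c, u, hc, hu, rfl⟩ := hx
  refine ⟨fun e => ∑ i ∈ Finset.univ.filter (fun i => u i = e), c i,
    fun r => Finset.sum_nonneg fun i _ => hc i, ?_⟩
  rw [← Finset.sum_fiberwise_of_maps_to (g := u) (fun i _ => Finset.mem_coe.1 (hu i))
    (fun i => c i • u i)]
  refine Finset.sum_congr rfl fun e _ => ?_
  rw [Finset.sum_smul]
  exact Finset.sum_congr rfl fun i hi => by rw [(Finset.mem_filter.1 hi).2]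

lemma int_mul_den_dvd {q : ℚ} {D : ℕ} (h : q.den ∣ D) :
    ((q.num * (D / q.den : ℕ) : ℤ) : ℚ) = q * D := by
  obtain ⟨k, rfl⟩ := h
  rw [Nat.mul_div_cancel_left _ q.pos]
  have hden : (q.den : ℚ) ≠ 0 := Nat.cast_ne_zero.2 q.den_nz
  have hnum : (q.num : ℚ) = q * q.den := by
    exact (div_eq_iff hden).1 (Rat.num_div_den q)
  push_cast
  rw [hnum]; ring

lemma fract_div_int (z : ℤ) (d : ℕ) (hd : 0 < d) :
    Int.fract ((z : ℚ) / d) = ((z % d : ℤ) : ℚ) / d := by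
  have hd0 : (d : ℚ) ≠ 0 := Nat.cast_ne_zero.2 hd.ne'
  have hdz : (d : ℤ) ≠ 0 := Int.natCast_ne_zero.2 hd.ne'
  have h1 : (z : ℚ) / d = ((z / (d:ℤ) : ℤ) : ℚ) + ((z % (d:ℤ) : ℤ) : ℚ) / d := by
    have h2 : z / (d:ℤ) * d + z % d = z := by rw [mul_comm]; exact Int.mul_ediv_add_emod z d
    field_simp
    exact_mod_cast (by rw [mul_comm] at h2; exact h2.symm : z = (d:ℤ) * (z / d) + z % d)
  rw [h1, Int.fract_intCast_add, Int.fract_eq_self.2 ⟨?_, ?_⟩]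
  · exact div_nonneg (by exact_mod_cast Int.emod_nonneg z hdz) (by positivity)
  · rw [div_lt_one (by positivity)]
    exact_mod_cast Int.emod_lt_of_pos z (by exact_mod_cast hd)

/-- Given a rational polyhedral cone `C`, a sequence of integer vectors in
`C ∩ ℤⁿ` and a rational vector `q*`, there are an infinite set `I` and an
index `i*` such that for all `i ∈ I`, `vⁱ - v^{i*} ∈ C` and the fractional
parts of `vⁱ·q*` and `v^{i*}·q*` agree. -/
theorem infinite_chain_in_rational_cone (n : ℕ) (C : Set (Fin n → ℝ))
    (R : Finset (Fin n → ℝ)) (hR : ∀ r ∈ R, ∀ j, ∃ q : ℚ, r j = (q : ℝ))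
    (hC : C = conicalHull (R : Set (Fin n → ℝ)))
    (v : ℕ → Fin n → ℤ) (hv : ∀ i, (fun j => ((v i j : ℝ))) ∈ C)
    (qstar : Fin n → ℚ) :
    ∃ (I : Set ℕ) (istar : ℕ), I.Infinite ∧
      ∀ i ∈ I, ((fun j => ((v i j - v istar j : ℤ) : ℝ)) ∈ C) ∧
        Int.fract (∑ j, (v i j : ℚ) * qstar j)
          = Int.fract (∑ j, (v istar j : ℚ) * qstar j) := by
  classical
  subst hC
  -- rational data for the generators
  choose qf hqf using fun (r : {x // x ∈ R}) (j : Fin n) => hR r r.2 j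
  set N : ℕ := ∏ r : {x // x ∈ R}, ∏ j, (qf r j).den with hN
  have hNpos : 0 < N := Finset.prod_pos fun r _ => Finset.prod_pos fun j _ => (qf r j).pos
  have hNR : (0:ℝ) < N := by exact_mod_cast hNpos
  have hdvd : ∀ (r : {x // x ∈ R}) (j : Fin n), (qf r j).den ∣ N := by
    intro r j
    have h1 : (qf r j).den ∣ ∏ j', (qf r j').den :=
      Finset.dvd_prod_of_mem (fun j' => (qf r j').den) (Finset.mem_univ j)
    have h2 : (∏ j', (qf r j').den) ∣ N :=
      Finset.dvd_prod_of_mem (fun r' => ∏ j', (qf r' j').den) (Finset.mem_univ r)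
    exact h1.trans h2
  set w : {x // x ∈ R} → Fin n → ℤ := fun r j => (qf r j).num * ((N / (qf r j).den : ℕ) : ℤ)
    with hwdef
  have hwR : ∀ r j, ((w r j : ℝ)) = (r : Fin n → ℝ) j * N := by
    intro r j
    have h1 : ((w r j : ℚ)) = qf r j * N := int_mul_den_dvd (hdvd r j)
    have h2 : (((w r j : ℚ)) : ℝ) = ((qf r j * N : ℚ) : ℝ) := by rw [h1]
    push_cast at h2
    rw [← hqf r j] at h2
    exact_mod_cast h2
  -- coefficient representations of the v i
  choose c hc0 hcsum using fun i => mem_conicalHull_finset (hv i)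
  set a : ℕ → {x // x ∈ R} → ℝ := fun i r => c i r / N with hadef
  have ha0 : ∀ i r, 0 ≤ a i r := fun i r => div_nonneg (hc0 i r) hNR.le
  have hva : ∀ i j, (v i j : ℝ) = ∑ r : {x // x ∈ R}, a i r * (w r j : ℝ) := by
    intro i j
    have h1 : (v i j : ℝ) = ∑ r ∈ R, c i r * r j := by
      have := congrFun (hcsum i) j
      simpa [Finset.sum_apply] using this
    rw [h1, ← Finset.sum_coe_sort R (fun r => c i r * r j)]
    refine Finset.sum_congr rfl fun r _ => ?_
    rw [hwR r j, hadef]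
    field_simp
  set m : ℕ → {x // x ∈ R} → ℕ := fun i r => ⌊a i r⌋₊ with hmdef
  set p : ℕ → Fin n → ℤ := fun i j => v i j - ∑ r : {x // x ∈ R}, (m i r : ℤ) * w r j with hpdef
  have hpR : ∀ i j, (p i j : ℝ) = ∑ r : {x // x ∈ R}, (a i r - m i r) * (w r j : ℝ) := by
    intro i j
    rw [hpdef]
    push_cast
    rw [hva i j, ← Finset.sum_sub_distrib]
    exact Finset.sum_congr rfl fun r _ => by ring
  -- bound on p
  set B : Fin n → ℤ := fun j => ∑ r : {x // x ∈ R}, |w r j| with hBdef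
  have hpB : ∀ i j, |p i j| ≤ B j := by
    intro i j
    have hb : |(p i j : ℝ)| ≤ (B j : ℝ) := by
      rw [hpR, hBdef]
      push_cast
      refine le_trans (Finset.abs_sum_le_sum_abs _ _) (Finset.sum_le_sum fun r _ => ?_)
      rw [abs_mul]
      have h1 : (m i r : ℝ) ≤ a i r := Nat.floor_le (ha0 i r)
      have h2 : a i r < m i r + 1 := Nat.lt_floor_add_one _
      have : |a i r - m i r| ≤ 1 := by rw [abs_le]; constructor <;> linarith
      calc |a i r - m i r| * |(w r j : ℝ)| ≤ 1 * |(w r j : ℝ)| :=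
            mul_le_mul_of_nonneg_right this (abs_nonneg _)
        _ = |(w r j : ℝ)| := one_mul _
    exact_mod_cast hb
  -- denominator data for qstar
  set d : ℕ := ∏ j, (qstar j).den with hddef
  have hd : 0 < d := Finset.prod_pos fun j _ => (qstar j).pos
  have hdq : (0:ℚ) < d := by exact_mod_cast hd
  set u : Fin n → ℤ := fun j => (qstar j).num * ((d / (qstar j).den : ℕ) : ℤ) with hudef
  have hu : ∀ j, ((u j : ℚ)) = qstar j * d := fun j =>
    int_mul_den_dvd (Finset.dvd_prod_of_mem _ (Finset.mem_univ j))
  set z : ℕ → ℤ := fun i => ∑ j, v i j * u j with hzdef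
  have hzq : ∀ i, ∑ j, (v i j : ℚ) * qstar j = (z i : ℚ) / d := by
    intro i
    rw [eq_div_iff hdq.ne', hzdef, Finset.sum_mul]
    push_cast
    refine Finset.sum_congr rfl fun j _ => ?_
    rw [mul_assoc, ← hu j]
  have hfract : ∀ i, Int.fract (∑ j, (v i j : ℚ) * qstar j) = ((z i % d : ℤ) : ℚ) / d := by
    intro i
    rw [hzq i, fract_div_int _ _ hd]
  -- pigeonhole on the pair (p i, z i % d)
  set key : ℕ → (Fin n → ℤ) × ℤ := fun i => (p i, z i % d) with hkeydef
  have hfin : (Set.range key).Finite := by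
    refine Set.Finite.subset (Set.Finite.prod
      (Set.Finite.pi (fun j => Set.finite_Icc (-(B j)) (B j)))
      (Set.finite_Icc (0:ℤ) d)) ?_
    rintro _ ⟨i, rfl⟩
    constructor
    · intro j _
      exact Set.mem_Icc.2 (abs_le.1 (hpB i j))
    · refine Set.mem_Icc.2 ⟨Int.emod_nonneg _ (by exact_mod_cast hd.ne'), ?_⟩
      exact le_of_lt (Int.emod_lt_of_pos _ (by exact_mod_cast hd))
  obtain ⟨k0, hk0⟩ := exists_infinite_fiber'' key hfin
  obtain ⟨E⟩ : Nonempty (ℕ ↪ ↥(key ⁻¹' {k0})) := ⟨hk0.natEmbedding⟩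
  set e : ℕ → ℕ := fun k => (E k : ℕ) with hedef
  have he_inj : Function.Injective e :=
    fun a b h => E.injective (Subtype.ext h)
  have hek : ∀ k, key (e k) = k0 := fun k => (E k).2
  -- Dickson's lemma
  have hpwo : (Set.univ : Set ({x // x ∈ R} → ℕ)).IsPWO :=
    Set.isPWO_of_wellQuasiOrderedLE _
  obtain ⟨g, hg⟩ := hpwo.exists_monotone_subseq
    (f := fun k => m (e k)) (fun _ => Set.mem_univ _)
  refine ⟨Set.range (fun k => e (g k)), e (g 0), ?_, ?_⟩
  · exact Set.infinite_range_of_injective (he_inj.comp (g.injective))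
  · rintro i ⟨k, rfl⟩
    have hm : ∀ r, m (e (g 0)) r ≤ m (e (g k)) r := fun r => hg (Nat.zero_le k) r
    have hkey : key (e (g k)) = key (e (g 0)) := by rw [hek, hek]
    have hp : p (e (g k)) = p (e (g 0)) := congrArg Prod.fst hkey
    have hzz : z (e (g k)) % d = z (e (g 0)) % d := congrArg Prod.snd hkey
    constructor
    · -- cone membership
      have hdiff : ∀ j, v (e (g k)) j - v (e (g 0)) j
          = ∑ r : {x // x ∈ R}, ((m (e (g k)) r : ℤ) - (m (e (g 0)) r : ℤ)) * w r j := by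
        intro j
        have hpj : p (e (g k)) j = p (e (g 0)) j := congrFun hp j
        rw [hpdef] at hpj
        simp only at hpj
        have hsplit : ∑ r : {x // x ∈ R}, ((m (e (g k)) r : ℤ) - (m (e (g 0)) r : ℤ)) * w r j
            = (∑ r : {x // x ∈ R}, (m (e (g k)) r : ℤ) * w r j)
              - ∑ r : {x // x ∈ R}, (m (e (g 0)) r : ℤ) * w r j := by
          rw [← Finset.sum_sub_distrib]
          exact Finset.sum_congr rfl fun r _ => by ring
        rw [hsplit]
        omega
      set cc : (Fin n → ℝ) → ℝ := fun x =>
        if h : x ∈ R then ((m (e (g k)) ⟨x, h⟩ : ℝ) - (m (e (g 0)) ⟨x, h⟩ : ℝ)) * N else 0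
        with hccdef
      have hcc0 : ∀ x ∈ R, 0 ≤ cc x := by
        intro x hx
        rw [hccdef]
        simp only [dif_pos hx]
        have := hm ⟨x, hx⟩
        have h1 : (m (e (g 0)) ⟨x, hx⟩ : ℝ) ≤ (m (e (g k)) ⟨x, hx⟩ : ℝ) := by exact_mod_cast this
        nlinarith
      have heq : (fun j => ((v (e (g k)) j - v (e (g 0)) j : ℤ) : ℝ)) = ∑ r ∈ R, cc r • r := by
        funext j
        rw [Finset.sum_apply, ← Finset.sum_coe_sort R (fun r => (cc r • r) j)]
        have : ∀ r : {x // x ∈ R}, (cc r • (r : Fin n → ℝ)) j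
            = ((m (e (g k)) r : ℝ) - (m (e (g 0)) r : ℝ)) * (w r j : ℝ) := by
          intro r
          rw [Pi.smul_apply, smul_eq_mul, hccdef]
          simp only [dif_pos r.2]
          rw [hwR r j]
          ring
        rw [Finset.sum_congr rfl fun r _ => this r, hdiff j, Int.cast_sum]
        refine Finset.sum_congr rfl fun r _ => ?_
        push_cast
        ring
      rw [heq]
      exact sum_mem_conicalHull R cc hcc0
    · rw [hfract, hfract, hzz]
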